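/- In the balanced flower graph with 4 ≤ k ≤ 2√n and 1 ≤ c < ⌊k/2⌋ - 1, no vertex can strictly improve its utility by unilaterally changing its out-edge set; i.e., the balanced flower graph is stable. -/

import Mathlib

variable {V : Type*} [Fintype V] [DecidableEq V]

omit [DecidableEq V] in
lemma ncard_compl_singleton (v : V) : ({v}ᶜ : Set V).ncard = Fintype.card V - 1 := by
  classical
  rw [Set.ncard_eq_toFinset_card']
  simp [Finset.card_compl]

/-- There is a directed path of length at most `k` from `a` to `b`. -/
def within {W : Type*} (G : W → W → Prop) : ℕ → W → W → Prop
  | 0, a, b => a = b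
  | m+1, a, b => a = b ∨ ∃ w, G a w ∧ within G m w b

/-- Vertices other than `v` reachable from `v` within distance `k`. -/
def reachK (G : V → V → Prop) (k : ℕ) (v : V) : Set V :=
  {w | w ≠ v ∧ within G k v w}

/-- Out-degree of `v`. -/
noncomputable def outdeg (G : V → V → Prop) (v : V) : ℕ :=
  {w | G v w}.ncard

/-- Utility of `v` with distance bound `k` and per-edge cost `c`. -/
noncomputable def utilK (G : V → V → Prop) (c : ℝ) (k : ℕ) (v : V) : ℝ :=
  ((reachK G k v).ncard : ℝ) - c * (outdeg G v : ℝ)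

/-- Unilateral deviation: `v` replaces its out-neighbourhood by `S`. -/
def deviateD (G : V → V → Prop) (v : V) (S : V → Prop) : V → V → Prop :=
  fun a b => if a = v then S b else G a b

/-- Edge relation of the directed cycle through the vertices of the list `M` (in order,
wrapping around). -/
def cycEdge {W : Type*} (M : List W) (a b : W) : Prop :=
  ∃ i : Fin M.length,
    M.get i = a ∧
    M.get ⟨(i.1 + 1) % M.length,
      Nat.mod_lt _ (Nat.lt_of_le_of_lt (Nat.zero_le _) i.isLt)⟩ = b

/-- `G` is a balanced flower graph with center `u` and distance parameter `k`:
the non-center vertices are partitioned into `q = ⌈(n-1)/⌊k/2⌋⌉` petals, each a directed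
cycle through the center of between `⌊k/2⌋ - 1` and `⌊k/2⌋` non-center vertices, and the
edges of `G` are exactly the petal-cycle edges. -/
def IsBalancedFlower {W : Type*} [Fintype W] (G : W → W → Prop) (k : ℕ) (u : W) : Prop :=
  ∃ (q : ℕ) (P : Fin q → List W),
    q = (Fintype.card W - 1 + (k / 2 - 1)) / (k / 2) ∧
    (∀ i, (P i).Nodup) ∧
    (∀ i, u ∉ P i) ∧
    (∀ i j, i ≠ j → ∀ x, x ∈ P i → x ∉ P j) ∧
    (∀ x : W, x ≠ u → ∃ i, x ∈ P i) ∧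
    (∀ i, k / 2 - 1 ≤ (P i).length ∧ (P i).length ≤ k / 2) ∧
    (∀ a b, G a b ↔ ∃ i, cycEdge (u :: P i) a b)

lemma within_le {W : Type*} {G : W → W → Prop} :
    ∀ {m' m : ℕ}, m ≤ m' → ∀ {a b}, within G m a b → within G m' a b := by
  intro m'
  induction m' with
  | zero => intro m hm a b h; interval_cases m; exact h
  | succ n ih =>
    intro m hm a b h
    match m, h with
    | 0, h => exact Or.inl h
    | (t+1), Or.inl h => exact Or.inl h
    | (t+1), Or.inr ⟨w, hw, h⟩ => exact Or.inr ⟨w, hw, ih (by omega) h⟩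

lemma within_trans {W : Type*} {G : W → W → Prop} :
    ∀ {m1 : ℕ} {a b : W}, within G m1 a b → ∀ {m2 c}, within G m2 b c →
      within G (m1 + m2) a c := by
  intro m1
  induction m1 with
  | zero => intro a b h m2 c h2; rw [show a = b from h]; simpa using h2
  | succ n ih =>
    intro a b h m2 c h2
    rcases h with h | ⟨w, hw, h⟩
    · subst h; exact within_le (by omega) h2
    · rw [Nat.succ_add]; exact Or.inr ⟨w, hw, ih h h2⟩

lemma within_mono_rel {W : Type*} {G H : W → W → Prop} (hGH : ∀ a b, G a b → H a b) :
    ∀ (m : ℕ) {a b}, within G m a b → within H m a b := by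
  intro m
  induction m with
  | zero => intro a b h; exact h
  | succ n ih =>
    rintro a b (h | ⟨w, hw, h⟩)
    · exact Or.inl h
    · exact Or.inr ⟨w, hGH _ _ hw, ih h⟩

lemma cyc_within {W : Type*} (L : List W) (hL : 0 < L.length) :
    ∀ (d : ℕ) (i : Fin L.length), within (cycEdge L) d (L.get i)
      (L.get ⟨(i.1 + d) % L.length, Nat.mod_lt _ hL⟩) := by
  intro d
  induction d with
  | zero =>
    intro i
    show L.get i = _
    congr 1
    exact Fin.ext (by simp [Nat.mod_eq_of_lt i.isLt])
  | succ n ih =>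
    intro i
    refine Or.inr ⟨L.get ⟨(i.1 + 1) % L.length, Nat.mod_lt _ hL⟩, ⟨i, rfl, rfl⟩, ?_⟩
    have := ih ⟨(i.1 + 1) % L.length, Nat.mod_lt _ hL⟩
    convert this using 2
    refine Fin.ext ?_
    show (i.1 + (n+1)) % L.length = ((i.1+1) % L.length + n) % L.length
    rw [Nat.mod_add_mod, Nat.add_assoc, Nat.add_comm 1 n]

lemma cycEdge_unique {W : Type*} {L : List W} (hL : L.Nodup) {a b b' : W}
    (h : cycEdge L a b) (h' : cycEdge L a b') : b = b' := by
  obtain ⟨i, hi, hb⟩ := h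
  obtain ⟨i', hi', hb'⟩ := h'
  have : i = i' := (hL.get_inj_iff).mp (hi.trans hi'.symm)
  subst this; exact hb.symm.trans hb'

lemma cycEdge_src_mem {W : Type*} {L : List W} {a b : W} (h : cycEdge L a b) : a ∈ L := by
  obtain ⟨i, hi, _⟩ := h; exact hi ▸ L.get_mem _

lemma cycEdge_tgt_mem {W : Type*} {L : List W} {a b : W} (h : cycEdge L a b) : b ∈ L := by
  obtain ⟨i, _, hb⟩ := h; exact hb ▸ L.get_mem _

section Flower

variable {V : Type*} [Fintype V] [DecidableEq V]
variable {G : V → V → Prop} {k : ℕ} {u : V} {q : ℕ} {P : Fin q → List V}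

-- from a petal vertex to the center in at most (P i).length steps
omit [Fintype V] [DecidableEq V] in
lemma petal_to_center (hedge : ∀ a b, G a b ↔ ∃ i, cycEdge (u :: P i) a b)
    {i : Fin q} {v : V} (hv : v ∈ P i) : within G ((P i).length) v u := by
  set L := u :: P i with hLdef
  have hLpos : 0 < L.length := by simp [hLdef]
  obtain ⟨t, ht⟩ := List.mem_iff_get.mp hv
  have hlen : L.length = (P i).length + 1 := by simp [hLdef]
  have htL : (t.1 + 1) < L.length := by omega
  have hvL : L.get ⟨t.1 + 1, htL⟩ = v := ht
  have hw := cyc_within L hLpos (L.length - (t.1 + 1)) ⟨t.1 + 1, htL⟩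
  rw [hvL] at hw
  have hmod : (t.1 + 1 + (L.length - (t.1 + 1))) % L.length = 0 := by
    rw [Nat.add_sub_cancel' (le_of_lt htL), Nat.mod_self]
  have hu : L.get ⟨(t.1 + 1 + (L.length - (t.1+1))) % L.length, Nat.mod_lt _ hLpos⟩ = u := by
    have : (⟨(t.1 + 1 + (L.length - (t.1+1))) % L.length, Nat.mod_lt _ hLpos⟩ : Fin L.length)
        = ⟨0, hLpos⟩ := Fin.ext hmod
    rw [this]; rfl
  rw [hu] at hw
  have hG := within_mono_rel (G := cycEdge L) (H := G)
    (fun a b hab => (hedge a b).mpr ⟨i, hab⟩) _ hw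
  exact within_le (by omega) hG

-- from the center to a petal vertex in at most (P i).length steps
omit [Fintype V] [DecidableEq V] in
lemma center_to_petal (hedge : ∀ a b, G a b ↔ ∃ i, cycEdge (u :: P i) a b)
    {i : Fin q} {w : V} (hw : w ∈ P i) : within G ((P i).length) u w := by
  set L := u :: P i with hLdef
  have hLpos : 0 < L.length := by simp [hLdef]
  obtain ⟨t, ht⟩ := List.mem_iff_get.mp hw
  have hlen : L.length = (P i).length + 1 := by simp [hLdef]
  have hW := cyc_within L hLpos (t.1 + 1) ⟨0, hLpos⟩
  have h0 : L.get ⟨0, hLpos⟩ = u := rfl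
  have hmod : (0 + (t.1 + 1)) % L.length = t.1 + 1 := by
    rw [Nat.zero_add]; exact Nat.mod_eq_of_lt (by omega)
  have htL : (t.1 + 1) < L.length := by omega
  have hv : L.get ⟨(0 + (t.1+1)) % L.length, Nat.mod_lt _ hLpos⟩ = w := by
    have : (⟨(0 + (t.1+1)) % L.length, Nat.mod_lt _ hLpos⟩ : Fin L.length)
        = ⟨t.1 + 1, htL⟩ := Fin.ext hmod
    rw [this]; exact ht
  rw [h0, hv] at hW
  have hG := within_mono_rel (G := cycEdge L) (H := G)
    (fun a b hab => (hedge a b).mpr ⟨i, hab⟩) _ hW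
  exact within_le (by omega) hG

omit [Fintype V] [DecidableEq V] in
lemma flower_within
    (hcov : ∀ x : V, x ≠ u → ∃ i, x ∈ P i)
    (hlen : ∀ i, k / 2 - 1 ≤ (P i).length ∧ (P i).length ≤ k / 2)
    (hedge : ∀ a b, G a b ↔ ∃ i, cycEdge (u :: P i) a b)
    (hk : 4 ≤ k) : ∀ v w : V, within G k v w := by
  intro v w
  have hm2 : 2 * (k / 2) ≤ k := by have := Nat.div_mul_le_self k 2; omega
  by_cases hv : v = u
  · rw [hv]
    by_cases hwu : w = u
    · rw [hwu]; exact within_le (Nat.zero_le _) (show within G 0 u u from rfl)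
    · obtain ⟨i, hi⟩ := hcov w hwu
      exact within_le (by have := (hlen i).2; omega) (center_to_petal hedge hi)
  · obtain ⟨i, hi⟩ := hcov v hv
    have h1 : within G (k/2) v u :=
      within_le (by have := (hlen i).2; omega) (petal_to_center hedge hi)
    by_cases hwu : w = u
    · rw [hwu]; exact within_le (by omega) h1
    · obtain ⟨j, hj⟩ := hcov w hwu
      have h2 : within G (k/2) u w :=
        within_le (by have := (hlen j).2; omega) (center_to_petal hedge hj)
      exact within_le (by omega) (within_trans h1 h2)


lemma petal_unique (hnotu : ∀ i, u ∉ P i)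
    (hdisj : ∀ i j, i ≠ j → ∀ x, x ∈ P i → x ∉ P j)
    {i j : Fin q} {v : V} (hv : v ∈ P i) (hvj : v ∈ u :: P j) : j = i := by
  rcases List.mem_cons.mp hvj with h | h
  · exact absurd (h ▸ hv) (hnotu i)
  · by_contra hne
    exact hdisj j i hne v h hv

lemma outset_petal (hnd : ∀ i, (P i).Nodup) (hnotu : ∀ i, u ∉ P i)
    (hdisj : ∀ i j, i ≠ j → ∀ x, x ∈ P i → x ∉ P j)
    (hedge : ∀ a b, G a b ↔ ∃ i, cycEdge (u :: P i) a b)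
    {i : Fin q} {v : V} (hv : v ∈ P i) : {b | G v b}.ncard = 1 := by
  set L := u :: P i with hLdef
  have hLnd : L.Nodup := List.nodup_cons.mpr ⟨hnotu i, hnd i⟩
  have hvL : v ∈ L := List.mem_cons_of_mem _ hv
  obtain ⟨s, hs⟩ := List.mem_iff_get.mp hvL
  have hLpos : 0 < L.length := by simp [hLdef]
  have hE : cycEdge L v (L.get ⟨(s.1 + 1) % L.length, Nat.mod_lt _ hLpos⟩) :=
    ⟨s, hs, rfl⟩
  rw [Set.ncard_eq_one]
  refine ⟨L.get ⟨(s.1 + 1) % L.length, Nat.mod_lt _ hLpos⟩, ?_⟩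
  ext b
  simp only [Set.mem_setOf_eq, Set.mem_singleton_iff]
  constructor
  · intro hb
    obtain ⟨j, hcyc⟩ := (hedge v b).mp hb
    have hji : j = i := petal_unique hnotu hdisj hv (cycEdge_src_mem hcyc)
    subst hji
    exact cycEdge_unique hLnd hcyc hE
  · rintro rfl
    exact (hedge _ _).mpr ⟨i, hE⟩

lemma outset_center (hnd : ∀ i, (P i).Nodup) (hnotu : ∀ i, u ∉ P i)
    (hdisj : ∀ i j, i ≠ j → ∀ x, x ∈ P i → x ∉ P j)
    (hplen : ∀ i, 0 < (P i).length)
    (hedge : ∀ a b, G a b ↔ ∃ i, cycEdge (u :: P i) a b) :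
    {b | G u b}.ncard = q := by
  set f : Fin q → V := fun i => (P i).get ⟨0, hplen i⟩ with hfdef
  have hfmem : ∀ i, f i ∈ P i := fun i => (P i).get_mem _
  have hfinj : Function.Injective f := by
    intro i j hij
    by_contra hne
    exact hdisj i j hne (f i) (hfmem i) (hij ▸ hfmem j)
  have key : ∀ j : Fin q, ∀ (h2 : 1 < (u :: P j).length),
      (u :: P j).get ⟨1 % (u :: P j).length, Nat.mod_lt _ (by omega)⟩ = f j := by
    intro j h2
    have h1 : (1 : ℕ) % (u :: P j).length = 1 := Nat.mod_eq_of_lt h2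
    have : (⟨1 % (u :: P j).length, Nat.mod_lt _ (by omega)⟩ : Fin (u :: P j).length)
        = ⟨1, h2⟩ := Fin.ext h1
    rw [this]; rfl
  have hset : {b | G u b} = Set.range f := by
    ext b
    simp only [Set.mem_setOf_eq, Set.mem_range]
    constructor
    · intro hb
      obtain ⟨j, idx, hidx, hbeq⟩ := (hedge u b).mp hb
      have hLnd : (u :: P j).Nodup := List.nodup_cons.mpr ⟨hnotu j, hnd j⟩
      have h2 : 1 < (u :: P j).length := by
        have := hplen j; simp only [List.length_cons]; omega
      have h0 : (u :: P j).get ⟨0, by omega⟩ = u := rfl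
      have hidx0 : idx = ⟨0, by omega⟩ :=
        (hLnd.get_inj_iff).mp (hidx.trans h0.symm)
      subst hidx0
      refine ⟨j, ?_⟩
      rw [← hbeq]
      exact (key j h2).symm
    · rintro ⟨j, rfl⟩
      have h2 : 1 < (u :: P j).length := by
        have := hplen j; simp only [List.length_cons]; omega
      refine (hedge _ _).mpr ⟨j, ⟨0, by omega⟩, rfl, key j h2⟩

  rw [hset]
  rw [Set.ncard_eq_toFinset_card']
  rw [Set.toFinset_range, Finset.card_image_of_injective _ hfinj]
  simp

lemma sum_petals (hnd : ∀ i, (P i).Nodup) (hnotu : ∀ i, u ∉ P i)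
    (hdisj : ∀ i j, i ≠ j → ∀ x, x ∈ P i → x ∉ P j)
    (hcov : ∀ x : V, x ≠ u → ∃ i, x ∈ P i) :
    ∑ i, (P i).length = Fintype.card V - 1 := by
  classical
  have hbu : (Finset.univ.biUnion fun i => (P i).toFinset) = Finset.univ.erase u := by
    ext x
    simp only [Finset.mem_biUnion, Finset.mem_univ, true_and, List.mem_toFinset,
      Finset.mem_erase, and_true]
    constructor
    · rintro ⟨i, hi⟩
      intro hx; exact hnotu i (hx ▸ hi)
    · intro hx; exact hcov x hx
  have hdisj' : ∀ i ∈ Finset.univ, ∀ j ∈ Finset.univ, i ≠ j →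
      Disjoint ((P i).toFinset) ((P j).toFinset) := by
    intro i _ j _ hij
    rw [Finset.disjoint_left]
    intro x hx hx'
    exact hdisj i j hij x (List.mem_toFinset.mp hx) (List.mem_toFinset.mp hx')
  have := Finset.card_biUnion hdisj'
  rw [hbu, Finset.card_erase_of_mem (Finset.mem_univ u), Finset.card_univ] at this
  rw [this]
  exact Finset.sum_congr rfl fun i _ => (List.toFinset_card_of_nodup (hnd i)).symm

end Flower

/-- For `4 ≤ k ≤ 2√n` and `1 ≤ c < ⌊k/2⌋ - 1`, the balanced flower graph is stable:
no vertex can strictly improve its utility by unilaterally changing its out-edge set. -/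
theorem stmt17 (G : V → V → Prop) (c : ℝ) (k : ℕ) (u : V)
    (hn : 3 ≤ Fintype.card V) (hk : 4 ≤ k)
    (hk2 : (k : ℝ) ≤ 2 * Real.sqrt (Fintype.card V))
    (hc1 : 1 ≤ c) (hc2 : c < ((k / 2 : ℕ) : ℝ) - 1)
    (hflower : IsBalancedFlower G k u) :
    ∀ (v : V) (S : V → Prop), utilK (deviateD G v S) c k v ≤ utilK G c k v := by
  classical
  obtain ⟨q, P, hq, hnd, hnotu, hdisj, hcov, hlen, hedge⟩ := hflower
  set n := Fintype.card V with hndef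
  have hm2 : 2 ≤ k / 2 := by omega
  have hplen : ∀ i, 0 < (P i).length := fun i => by have := (hlen i).1; omega
  have hreach : ∀ v w : V, within G k v w := flower_within hcov hlen hedge hk
  have hreachcard : ∀ v : V, (reachK G k v).ncard = n - 1 := by
    intro v
    have : reachK G k v = {v}ᶜ := by
      ext w; simp [reachK, hreach v w]
    rw [this, ncard_compl_singleton]
  have hcn : c ≤ (n : ℝ) - 1 := by
    have h1 : ((k / 2 : ℕ) : ℝ) ≤ (k : ℝ) / 2 := by
      have := Nat.cast_div_le (m := k) (n := 2) (α := ℝ)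
      simpa using this
    have h2 : (k : ℝ) / 2 ≤ Real.sqrt n := by linarith
    have h3 : Real.sqrt (n : ℝ) ≤ (n : ℝ) := by
      have hone : (1 : ℝ) ≤ (n : ℝ) := by
        have h3n : (3 : ℕ) ≤ n := hn
        exact_mod_cast le_trans (by norm_num) h3n
      nlinarith [Real.sq_sqrt (by linarith : (0:ℝ) ≤ (n:ℝ)),
        Real.sqrt_nonneg ((n:ℝ))]
    linarith
  have hn1cast : ((n - 1 : ℕ) : ℝ) = (n : ℝ) - 1 := by
    have h1n : 1 ≤ n := by omega
    push_cast [Nat.cast_sub h1n]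
    ring
  have hmcast : ((k / 2 - 1 : ℕ) : ℝ) = ((k / 2 : ℕ) : ℝ) - 1 := by
    push_cast [Nat.cast_sub (by omega : 1 ≤ k / 2)]
    ring
  intro v S
  set S' : Set V := {b | S b} with hS'def
  have houtdev : outdeg (deviateD G v S) v = S'.ncard := by
    unfold outdeg deviateD
    simp [hS'def]
  have hrd_le : (reachK (deviateD G v S) k v).ncard ≤ n - 1 := by
    calc (reachK (deviateD G v S) k v).ncard
        ≤ ({v}ᶜ : Set V).ncard :=
          Set.ncard_le_ncard (fun w hw => hw.1) (Set.toFinite _)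
      _ = n - 1 := ncard_compl_singleton v
  unfold utilK
  rw [houtdev, hreachcard v, hn1cast]
  by_cases hvu : v = u
  · -- center case
    subst hvu
    rw [show outdeg G v = q from outset_center hnd hnotu hdisj hplen hedge]
    have hsum : ∑ i, (P i).length = n - 1 := sum_petals hnd hnotu hdisj hcov
    set T : Finset (Fin q) := Finset.univ.filter (fun i => ∃ x, S x ∧ x ∈ P i) with hTdef
    -- invariant: everything reachable from the center lies in a touched petal
    have hstep : ∀ a b, (a = v ∨ ∃ i ∈ T, a ∈ P i) → deviateD G v S a b →
        (b = v ∨ ∃ i ∈ T, b ∈ P i) := by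
      rintro a b (rfl | ⟨i, hiT, hiP⟩) hab
      · unfold deviateD at hab
        rw [if_pos rfl] at hab
        by_cases hbv : b = a
        · exact Or.inl hbv
        · obtain ⟨i, hi⟩ := hcov b hbv
          exact Or.inr ⟨i, Finset.mem_filter.mpr ⟨Finset.mem_univ _, b, hab, hi⟩, hi⟩
      · have hane : a ≠ v := fun h => hnotu i (h ▸ hiP)
        unfold deviateD at hab
        rw [if_neg hane] at hab
        obtain ⟨j, hcyc⟩ := (hedge a b).mp hab
        have hji : j = i := petal_unique hnotu hdisj hiP (cycEdge_src_mem hcyc)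
        subst hji
        rcases List.mem_cons.mp (cycEdge_tgt_mem hcyc) with h | h
        · exact Or.inl h
        · exact Or.inr ⟨j, hiT, h⟩
    have hinv : ∀ d a, (a = v ∨ ∃ i ∈ T, a ∈ P i) →
        ∀ w, within (deviateD G v S) d a w → (w = v ∨ ∃ i ∈ T, w ∈ P i) := by
      intro d
      induction d with
      | zero => intro a ha w hw; exact (show a = w from hw) ▸ ha
      | succ t ih =>
        rintro a ha w (h | ⟨w', hw', hrest⟩)
        · exact h ▸ ha
        · exact ih w' (hstep a w' ha hw') w hrest
    have hrdT : (reachK (deviateD G v S) k v).ncard ≤ ∑ i ∈ T, (P i).length := by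
      have hsub : reachK (deviateD G v S) k v ⊆
          ↑(T.biUnion fun i => (P i).toFinset) := by
        rintro w ⟨hne, hwit⟩
        rcases hinv k v (Or.inl rfl) w hwit with h | ⟨i, hiT, hiP⟩
        · exact absurd h hne
        · simp only [Finset.coe_biUnion, Set.mem_iUnion, Finset.mem_coe,
            List.mem_toFinset]
          exact ⟨i, hiT, hiP⟩
      calc (reachK (deviateD G v S) k v).ncard
          ≤ (↑(T.biUnion fun i => (P i).toFinset) : Set V).ncard :=
            Set.ncard_le_ncard hsub (Set.toFinite _)
        _ = (T.biUnion fun i => (P i).toFinset).card := Set.ncard_coe_finset _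
        _ = ∑ i ∈ T, ((P i).toFinset).card := Finset.card_biUnion (by
            intro i _ j _ hij
            rw [Function.onFun, Finset.disjoint_left]
            intro x hx hx'
            exact hdisj i j hij x (List.mem_toFinset.mp hx) (List.mem_toFinset.mp hx'))
        _ = ∑ i ∈ T, (P i).length :=
            Finset.sum_congr rfl fun i _ => List.toFinset_card_of_nodup (hnd i)
    -- T.card ≤ S'.ncard
    have hTcard : T.card ≤ S'.ncard := by
      set f : Fin q → V := fun i =>
        if h : ∃ x, S x ∧ x ∈ P i then h.choose else v with hfdef
      have hf : ∀ i ∈ T, S (f i) ∧ f i ∈ P i := by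
        intro i hi
        have h := (Finset.mem_filter.mp hi).2
        simp only [hfdef, dif_pos h]
        exact h.choose_spec
      rw [show S'.ncard = S'.toFinset.card from Set.ncard_eq_toFinset_card' _]
      apply Finset.card_le_card_of_injOn f
      · intro i hi
        rw [Finset.mem_coe, Set.mem_toFinset]
        exact (hf i hi).1
      · intro i hi j hj hij
        by_contra hne
        exact hdisj i j hne (f i) (hf i hi).2 (hij ▸ (hf j hj).2)
    -- arithmetic
    have hsplit : (∑ i ∈ T, (P i).length) + (∑ i ∈ Tᶜ, (P i).length) = n - 1 := by
      rw [Finset.sum_add_sum_compl]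
      exact hsum
    have hTcq : T.card ≤ q := by
      have := Finset.card_le_univ T
      simpa using this
    have hcompl : Tᶜ.card = q - T.card := by
      rw [Finset.card_compl]
      simp
    have hBlow : Tᶜ.card * (k / 2 - 1) ≤ ∑ i ∈ Tᶜ, (P i).length := by
      calc Tᶜ.card * (k / 2 - 1) = ∑ _i ∈ Tᶜ, (k / 2 - 1) := by
            rw [Finset.sum_const, smul_eq_mul]
        _ ≤ ∑ i ∈ Tᶜ, (P i).length :=
            Finset.sum_le_sum fun i _ => (hlen i).1
    -- move to ℝ
    have hrdA : ((reachK (deviateD G v S) k v).ncard : ℝ)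
        ≤ ((∑ i ∈ T, (P i).length : ℕ) : ℝ) := Nat.cast_le.mpr hrdT
    have hABr : ((∑ i ∈ T, (P i).length : ℕ) : ℝ)
        + ((∑ i ∈ Tᶜ, (P i).length : ℕ) : ℝ) = (n : ℝ) - 1 := by
      rw [← Nat.cast_add, hsplit, hn1cast]
    have htsr : ((T.card : ℕ) : ℝ) ≤ ((S'.ncard : ℕ) : ℝ) := Nat.cast_le.mpr hTcard
    have htqr : ((T.card : ℕ) : ℝ) ≤ (q : ℝ) := Nat.cast_le.mpr hTcq
    have hmr2 : (2 : ℝ) ≤ ((k / 2 : ℕ) : ℝ) := by exact_mod_cast hm2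
    have hBr_low : ((q : ℝ) - ((T.card : ℕ) : ℝ)) * (((k / 2 : ℕ) : ℝ) - 1)
        ≤ ((∑ i ∈ Tᶜ, (P i).length : ℕ) : ℝ) := by
      have hcast : ((Tᶜ.card * (k / 2 - 1) : ℕ) : ℝ)
          ≤ ((∑ i ∈ Tᶜ, (P i).length : ℕ) : ℝ) := Nat.cast_le.mpr hBlow
      have hc2' : ((Tᶜ.card : ℕ) : ℝ) = (q : ℝ) - ((T.card : ℕ) : ℝ) := by
        rw [hcompl, Nat.cast_sub hTcq]
      rw [Nat.cast_mul, hc2', hmcast] at hcast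
      exact hcast
    by_cases hsq : q ≤ S'.ncard
    · have h1 : (q : ℝ) ≤ ((S'.ncard : ℕ) : ℝ) := Nat.cast_le.mpr hsq
      have h2 : ((reachK (deviateD G v S) k v).ncard : ℝ) ≤ (n : ℝ) - 1 := by
        rw [← hn1cast]; exact Nat.cast_le.mpr hrd_le
      have h3 : c * (q : ℝ) ≤ c * ((S'.ncard : ℕ) : ℝ) :=
        mul_le_mul_of_nonneg_left h1 (by linarith)
      linarith
    · push_neg at hsq
      have hsqr : ((S'.ncard : ℕ) : ℝ) ≤ (q : ℝ) - 1 := by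
        have hle : S'.ncard + 1 ≤ q := hsq
        have := Nat.cast_le (α := ℝ) |>.mpr hle
        push_cast at this
        linarith
      have h1 : c * ((q : ℝ) - ((S'.ncard : ℕ) : ℝ))
          ≤ (((k / 2 : ℕ) : ℝ) - 1) * ((q : ℝ) - ((S'.ncard : ℕ) : ℝ)) :=
        mul_le_mul_of_nonneg_right (by linarith [hc2]) (by linarith)
      have h2 : (((k / 2 : ℕ) : ℝ) - 1) * ((q : ℝ) - ((S'.ncard : ℕ) : ℝ))
          ≤ (((k / 2 : ℕ) : ℝ) - 1) * ((q : ℝ) - ((T.card : ℕ) : ℝ)) :=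
        mul_le_mul_of_nonneg_left (by linarith) (by linarith)
      have hkey : c * (q : ℝ) - c * ((S'.ncard : ℕ) : ℝ)
          ≤ ((∑ i ∈ Tᶜ, (P i).length : ℕ) : ℝ) := by linarith
      linarith
  · -- non-center case
    obtain ⟨i, hi⟩ := hcov v hvu
    rw [show outdeg G v = 1 from outset_petal hnd hnotu hdisj hedge hi]
    by_cases hvS : S'.Nonempty
    · have hs1 : 1 ≤ S'.ncard := (Set.ncard_pos (Set.toFinite _)).mpr hvS
      have h1 : (1 : ℝ) ≤ (S'.ncard : ℝ) := by exact_mod_cast hs1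
      have h2 : ((reachK (deviateD G v S) k v).ncard : ℝ) ≤ (n : ℝ) - 1 := by
        rw [← hn1cast]; exact Nat.cast_le.mpr hrd_le
      have h3 : c * 1 ≤ c * ((S'.ncard : ℕ) : ℝ) :=
        mul_le_mul_of_nonneg_left h1 (by linarith)
      push_cast
      linarith
    · have hSempty : S' = ∅ := Set.not_nonempty_iff_eq_empty.mp hvS
      have hnoedge : ∀ b, ¬ deviateD G v S v b := by
        intro b hb
        unfold deviateD at hb
        rw [if_pos rfl] at hb
        have : b ∈ S' := hb
        rw [hSempty] at this
        exact this
      have hstuck : ∀ d w, within (deviateD G v S) d v w → w = v := by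
        intro d
        induction d with
        | zero => intro w h; exact h.symm
        | succ t ih =>
          rintro w (h | ⟨w', hw', _⟩)
          · exact h.symm
          · exact absurd hw' (hnoedge w')
      have hre : reachK (deviateD G v S) k v = ∅ := by
        ext w
        simp only [reachK, Set.mem_setOf_eq, Set.mem_empty_iff_false, iff_false, not_and]
        intro hne hwit
        exact hne (hstuck k w hwit)
      rw [hre, hSempty]
      simp only [Set.ncard_empty, Nat.cast_zero, Nat.cast_one, mul_zero, mul_one, sub_zero]
      linarith
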